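/- Let $G$ be a finite group of order $pm$ with $p$ prime and $\gcd(p,m)=1$, acting on a finite-dimensional module $V$ over an algebraically closed field of characteristic $p$. Let $V_0 = \{v \in V : f(v) = 0 \text{ for all } f \in (V^*)^G\}$. Then $\delta(G,V) = 0$ if $V^G = \{0\}$; $\delta(G,V) = 1$ if $V^G \neq \{0\}$ and $V^G \cap V_0 = \{0\}$; and $\delta(G,V) = p$ otherwise. -/

import Mathlib

set_option linter.unusedSectionVars false


open MvPolynomial

/-- The action of a matrix `A` on polynomials, substituting each variable `X i`
by the linear form `∑ j, A i j • X j`, so that `(matAct A f)(v) = f(A ⬝ v)`. -/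
noncomputable def matAct {F : Type*} [Field F] {N : ℕ} (A : Matrix (Fin N) (Fin N) F) :
    MvPolynomial (Fin N) F →ₐ[F] MvPolynomial (Fin N) F :=
  aeval fun i => ∑ j, C (A i j) * X j

/-- `f` is an invariant of the representation `ρ`: `σ(f) = f ∘ σ⁻¹ = f` for all `σ ∈ G`. -/
def IsInv {F : Type*} [Field F] {N : ℕ} {G : Type*} [Group G]
    (ρ : G →* Matrix.GeneralLinearGroup (Fin N) F) (f : MvPolynomial (Fin N) F) : Prop :=
  ∀ σ : G, matAct ((ρ σ⁻¹ : Matrix.GeneralLinearGroup (Fin N) F) : Matrix (Fin N) (Fin N) F) f = f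

/-- `v` is a fixed point of the representation `ρ`. -/
def IsFixedPt {F : Type*} [Field F] {N : ℕ} {G : Type*} [Group G]
    (ρ : G →* Matrix.GeneralLinearGroup (Fin N) F) (v : Fin N → F) : Prop :=
  ∀ σ : G, Matrix.mulVec ((ρ σ : Matrix.GeneralLinearGroup (Fin N) F) : Matrix (Fin N) (Fin N) F) v = v

/-- `ε(G,v)`: minimal positive degree of a homogeneous invariant not vanishing at `v`. -/
noncomputable def epsGV {F : Type*} [Field F] {N : ℕ} {G : Type*} [Group G]
    (ρ : G →* Matrix.GeneralLinearGroup (Fin N) F) (v : Fin N → F) : ℕ :=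
  sInf {d : ℕ | 0 < d ∧ ∃ f : MvPolynomial (Fin N) F,
    IsInv ρ f ∧ f.IsHomogeneous d ∧ eval v f ≠ 0}

/-- `δ(G,V)`: the degree of reductivity, i.e. the supremum of `ε(G,v)` over nonzero
fixed points `v` (and `0` if `V^G = {0}`). -/
noncomputable def deltaGV {F : Type*} [Field F] {N : ℕ} {G : Type*} [Group G]
    (ρ : G →* Matrix.GeneralLinearGroup (Fin N) F) : ℕ :=
  sSup {e : ℕ | ∃ v : Fin N → F, v ≠ 0 ∧ IsFixedPt ρ v ∧ e = epsGV ρ v}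

/-- `V₀`: the common zero set of the `G`-invariant linear forms. -/
def Vzero {F : Type*} [Field F] {N : ℕ} {G : Type*} [Group G]
    (ρ : G →* Matrix.GeneralLinearGroup (Fin N) F) : Set (Fin N → F) :=
  {v | ∀ f : MvPolynomial (Fin N) F, IsInv ρ f → f.IsHomogeneous 1 → eval v f = 0}

section Helpers
variable {F : Type*} [Field F] {N : ℕ}

lemma eval_aeval' (x : Fin N → F) (s : Fin N → MvPolynomial (Fin N) F)
    (f : MvPolynomial (Fin N) F) :
    eval x (aeval s f) = eval (fun i => eval x (s i)) f := by
  induction f using MvPolynomial.induction_on with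
  | C a => simp
  | add f g hf hg => simp only [map_add, hf, hg]
  | mul_X f i hf => simp only [map_mul, hf, aeval_X, eval_mul, eval_X]

lemma eval_matAct (A : Matrix (Fin N) (Fin N) F) (f : MvPolynomial (Fin N) F) (x : Fin N → F) :
    eval x (matAct A f) = eval (A.mulVec x) f := by
  rw [matAct, eval_aeval']
  have h : (fun i => eval x (∑ j, C (A i j) * X j)) = A.mulVec x := by
    funext i
    simp [Matrix.mulVec, dotProduct]
  rw [h]

lemma matAct_matAct [Infinite F] (A B : Matrix (Fin N) (Fin N) F) (f : MvPolynomial (Fin N) F) :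
    matAct A (matAct B f) = matAct (B * A) f := by
  apply MvPolynomial.funext
  intro x
  rw [eval_matAct, eval_matAct, eval_matAct, ← Matrix.mulVec_mulVec]

lemma matAct_isHomogeneous {A : Matrix (Fin N) (Fin N) F} {f : MvPolynomial (Fin N) F} {n : ℕ}
    (hf : f.IsHomogeneous n) : (matAct A f).IsHomogeneous n := by
  have := hf.aeval (fun i => ∑ j, C (A i j) * X j) (n := 1) (fun i =>
    IsHomogeneous.sum _ _ _ (fun j _ => isHomogeneous_C_mul_X _ _))
  simpa [matAct] using this

end Helpers

section Constr

variable {F : Type*} [Field F] [IsAlgClosed F] {N : ℕ} {G : Type*} [Group G]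

/-- matrix of `ρ a` -/
private abbrev Mρ (ρ : G →* Matrix.GeneralLinearGroup (Fin N) F) (a : G) :
    Matrix (Fin N) (Fin N) F :=
  ((ρ a : Matrix.GeneralLinearGroup (Fin N) F) : Matrix (Fin N) (Fin N) F)

lemma Mρ_mul (ρ : G →* Matrix.GeneralLinearGroup (Fin N) F) (a b : G) :
    Mρ ρ (a * b) = Mρ ρ a * Mρ ρ b := by
  simp [Mρ]

lemma matAct_act_act (ρ : G →* Matrix.GeneralLinearGroup (Fin N) F) (a b : G)
    (h : MvPolynomial (Fin N) F) :
    matAct (Mρ ρ a⁻¹) (matAct (Mρ ρ b⁻¹) h) = matAct (Mρ ρ (a * b)⁻¹) h := by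
  rw [matAct_matAct, mul_inv_rev, Mρ_mul]

lemma exists_inv_deg_p {p m : ℕ} [CharP F p] (hp : p.Prime) [Fintype G]
    (hcard : Fintype.card G = p * m) (hcop : Nat.Coprime p m)
    (ρ : G →* Matrix.GeneralLinearGroup (Fin N) F) (v : Fin N → F)
    (hv : v ≠ 0) (hfix : IsFixedPt ρ v) :
    ∃ f : MvPolynomial (Fin N) F, IsInv ρ f ∧ f.IsHomogeneous p ∧ eval v f ≠ 0 := by
  classical
  obtain ⟨i, hvi⟩ : ∃ i, v i ≠ 0 := by
    by_contra hc
    push_neg at hc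
    exact hv (funext hc)
  haveI : Fact p.Prime := ⟨hp⟩
  obtain ⟨g, hg⟩ := exists_prime_orderOf_dvd_card p (hcard ▸ dvd_mul_right p m)
  set P : Subgroup G := Subgroup.zpowers g with hP
  have hPcard : Fintype.card P = p := by rw [Fintype.card_zpowers, hg]
  -- the `P`-norm of the linear form `X i`
  set h : MvPolynomial (Fin N) F := ∏ τ : P, matAct (Mρ ρ (τ : G)⁻¹) (X i) with hdefh
  have hhomh : h.IsHomogeneous p := by
    have := IsHomogeneous.prod Finset.univ
      (fun τ : P => matAct (Mρ ρ (τ : G)⁻¹) (X i)) (fun _ => 1)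
      (fun τ _ => matAct_isHomogeneous (isHomogeneous_X _ _))
    simpa [Finset.sum_const, Finset.card_univ, hPcard] using this
  have hPinv : ∀ c : G, c ∈ P → matAct (Mρ ρ c⁻¹) h = h := by
    intro c hc
    rw [hdefh, map_prod]
    have e1 : ∀ τ : P, matAct (Mρ ρ c⁻¹) (matAct (Mρ ρ (τ : G)⁻¹) (X i))
        = matAct (Mρ ρ ((((⟨c, hc⟩ : P) * τ : P) : G))⁻¹) (X i) := by
      intro τ
      rw [matAct_act_act]
      rfl
    rw [Finset.prod_congr rfl (fun τ _ => e1 τ)]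
    exact Equiv.prod_comp (Equiv.mulLeft (⟨c, hc⟩ : P))
      (fun τ : P => matAct (Mρ ρ (τ : G)⁻¹) (X i))
  -- same coset ⇒ same translate of `h`
  have hcoset : ∀ a b : G, (a : G ⧸ P) = (b : G ⧸ P) →
      matAct (Mρ ρ a⁻¹) h = matAct (Mρ ρ b⁻¹) h := by
    intro a b hab
    have hc : a⁻¹ * b ∈ P := (QuotientGroup.eq).mp hab
    have hb : b = a * (a⁻¹ * b) := by group
    calc matAct (Mρ ρ a⁻¹) h = matAct (Mρ ρ a⁻¹) (matAct (Mρ ρ (a⁻¹ * b)⁻¹) h) := by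
          rw [hPinv _ hc]
      _ = matAct (Mρ ρ (a * (a⁻¹ * b))⁻¹) h := matAct_act_act ..
      _ = matAct (Mρ ρ b⁻¹) h := by rw [← hb]
  set f : MvPolynomial (Fin N) F := ∑ q : G ⧸ P, matAct (Mρ ρ q.out⁻¹) h with hdeff
  have hcardQ : Nat.card (G ⧸ P) = m := by
    have := Subgroup.card_eq_card_quotient_mul_card_subgroup P
    rw [Nat.card_eq_fintype_card, Nat.card_eq_fintype_card (α := P), hPcard, hcard] at this
    have hp0 : 0 < p := hp.pos
    nlinarith [this]
  refine ⟨f, ?_, ?_, ?_⟩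
  · -- invariance
    intro σ
    rw [hdeff, map_sum]
    have e2 : ∀ q : G ⧸ P, matAct (Mρ ρ σ⁻¹) (matAct (Mρ ρ q.out⁻¹) h)
        = matAct (Mρ ρ (σ • q).out⁻¹) h := by
      intro q
      rw [matAct_act_act]
      apply hcoset
      rw [QuotientGroup.out_eq']
      exact MulAction.Quotient.mk_smul_out P σ q
    rw [Finset.sum_congr rfl (fun q _ => e2 q)]
    exact Equiv.sum_comp (MulAction.toPerm σ) (fun q : G ⧸ P => matAct (Mρ ρ q.out⁻¹) h)
  · -- homogeneity
    exact IsHomogeneous.sum _ _ _ (fun q _ => matAct_isHomogeneous hhomh)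
  · -- nonvanishing
    have hevalh : eval v h = (v i) ^ p := by
      rw [hdefh, map_prod]
      have : ∀ τ : P, eval v (matAct (Mρ ρ (τ : G)⁻¹) (X i)) = v i := by
        intro τ
        rw [eval_matAct, hfix, eval_X]
      rw [Finset.prod_congr rfl (fun τ _ => this τ), Finset.prod_const, Finset.card_univ, hPcard]
    have hevalf : eval v f = (m : F) * (v i) ^ p := by
      rw [hdeff, map_sum]
      have : ∀ q : G ⧸ P, eval v (matAct (Mρ ρ q.out⁻¹) h) = (v i) ^ p := by
        intro q
        rw [eval_matAct, hfix, hevalh]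
      rw [Finset.sum_congr rfl (fun q _ => this q), Finset.sum_const, Finset.card_univ,
        ← Nat.card_eq_fintype_card, hcardQ, nsmul_eq_mul]
    rw [hevalf]
    have hm : (m : F) ≠ 0 := by
      rw [Ne, CharP.cast_eq_zero_iff F p m]
      exact hp.coprime_iff_not_dvd.mp hcop
    exact mul_ne_zero hm (pow_ne_zero _ hvi)

end Constr

section Lower

variable {F : Type*} [Field F] [IsAlgClosed F] {N : ℕ} {G : Type*} [Group G]

lemma homog_eval_smul {f : MvPolynomial (Fin N) F} {n : ℕ} (hf : f.IsHomogeneous n)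
    (t : F) (x : Fin N → F) : eval (t • x) f = t ^ n * eval x f := by
  conv_lhs => rw [f.as_sum]
  conv_rhs => rw [f.as_sum]
  rw [map_sum, map_sum, Finset.mul_sum]
  apply Finset.sum_congr rfl
  intro d hd
  have hdeg : d.degree = n := by
    have := hf (MvPolynomial.mem_support_iff.mp hd)
    rwa [Finsupp.degree_eq_weight_one]
  rw [eval_monomial, eval_monomial]
  rw [Finsupp.prod, Finsupp.prod]
  simp only [Pi.smul_apply, smul_eq_mul, mul_pow]
  rw [Finset.prod_mul_distrib, Finset.prod_pow_eq_pow_sum]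
  have hs : ∑ i ∈ d.support, d i = n := by rw [← hdeg]; rfl
  rw [hs]; ring

lemma low_bound {ρ : G →* Matrix.GeneralLinearGroup (Fin N) F} {v : Fin N → F}
    (hfix : IsFixedPt ρ v) (hv0 : v ∈ Vzero ρ)
    {f : MvPolynomial (Fin N) F} {d : ℕ} (hinv : IsInv ρ f) (hhom : f.IsHomogeneous d)
    (hd : (d : F) ≠ 0) : eval v f = 0 := by
  classical
  -- functional invariance of f
  have hInvF : ∀ (σ : G) (y : Fin N → F), eval ((Mρ ρ σ).mulVec y) f = eval y f := by
    intro σ y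
    have h1 := hinv σ⁻¹
    rw [inv_inv] at h1
    conv_rhs => rw [← h1]
    rw [eval_matAct]
  -- the shifted polynomial g(x) = f(x + v)
  set g : MvPolynomial (Fin N) F := aeval (fun i => X i + C (v i)) f with hdefg
  have hevalg : ∀ y : Fin N → F, eval y g = eval (y + v) f := by
    intro y
    rw [hdefg, eval_aeval']
    have h2 : (fun i => eval y (X i + C (v i))) = y + v := by
      funext i; simp
    rw [h2]
  -- g is functionally invariant
  have hgInv : ∀ (σ : G) (y : Fin N → F), eval ((Mρ ρ σ).mulVec y) g = eval y g := by
    intro σ y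
    rw [hevalg, hevalg]
    have h3 : (Mρ ρ σ).mulVec y + v = (Mρ ρ σ).mulVec (y + v) := by
      rw [Matrix.mulVec_add, hfix σ]
    rw [h3, hInvF]
  set D : ℕ := g.totalDegree with hD
  set L : MvPolynomial (Fin N) F := homogeneousComponent 1 g with hdefL
  -- the one-variable restriction of g along the line t • x
  set qp : (Fin N → F) → Polynomial F := fun x =>
    ∑ n ∈ Finset.range (D + 1),
      Polynomial.C (eval x (homogeneousComponent n g)) * Polynomial.X ^ n with hdefqp
  have hqp_eval : ∀ (x : Fin N → F) (t : F), (qp x).eval t = eval (t • x) g := by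
    intro x t
    conv_rhs => rw [← sum_homogeneousComponent g]
    rw [map_sum]
    show Polynomial.eval t (∑ n ∈ Finset.range (D + 1),
      Polynomial.C (eval x (homogeneousComponent n g)) * Polynomial.X ^ n) = _
    simp only [Polynomial.eval_finset_sum, Polynomial.eval_mul, Polynomial.eval_C,
      Polynomial.eval_pow, Polynomial.eval_X]
    exact Finset.sum_congr rfl fun n _ => by
      rw [homog_eval_smul (homogeneousComponent_isHomogeneous n g)]; ring
  have hqp_coeff : ∀ x : Fin N → F, (qp x).coeff 1 = eval x L := by
    intro x
    show (∑ n ∈ Finset.range (D + 1),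
      Polynomial.C (eval x (homogeneousComponent n g)) * Polynomial.X ^ n).coeff 1 = _
    rw [Polynomial.finset_sum_coeff]
    rw [Finset.sum_eq_single 1]
    · simp [hdefL]
    · intro n _ hn
      rw [Polynomial.coeff_C_mul, Polynomial.coeff_X_pow, if_neg (Ne.symm hn), mul_zero]
    · intro h1
      have hD1 : D < 1 := by simpa using h1
      rw [homogeneousComponent_eq_zero _ _ (by omega : g.totalDegree < 1)]
      simp
  -- L is invariant
  have hLinv : IsInv ρ L := by
    intro σ
    apply MvPolynomial.funext
    intro x
    rw [eval_matAct]
    have hq : qp ((Mρ ρ σ⁻¹).mulVec x) = qp x := by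
      apply Polynomial.funext
      intro t
      rw [hqp_eval, hqp_eval, ← Matrix.mulVec_smul, hgInv]
    have h4 := congrArg (fun q => Polynomial.coeff q 1) hq
    simpa only [hqp_coeff] using h4
  -- Euler's relation : eval v L = d * eval v f
  have hEuler : eval v L = (d : F) * eval v f := by
    have hq : qp v = (Polynomial.X + 1) ^ d * Polynomial.C (eval v f) := by
      apply Polynomial.funext
      intro t
      rw [hqp_eval]
      have hsum : t • v + v = (t + 1) • v := by
        funext j
        simp [add_mul]
      rw [hevalg, hsum, homog_eval_smul hhom]
      simp
    have h5 := congrArg (fun q => Polynomial.coeff q 1) hq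
    simp only [hqp_coeff] at h5
    rw [h5, Polynomial.coeff_mul_C, Polynomial.coeff_X_add_one_pow, Nat.choose_one_right,
      mul_comm]
  have hL0 : eval v L = 0 := hv0 L hLinv (homogeneousComponent_isHomogeneous 1 g)
  rw [hL0] at hEuler
  exact (mul_eq_zero.mp hEuler.symm).resolve_left hd

end Lower

section Eps

variable {F : Type*} [Field F] [IsAlgClosed F] {N : ℕ} {G : Type*} [Group G]

lemma eps_eq_one {ρ : G →* Matrix.GeneralLinearGroup (Fin N) F} {v : Fin N → F}
    (hnv : v ∉ Vzero ρ) : epsGV ρ v = 1 := by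
  have hone : 1 ∈ {d : ℕ | 0 < d ∧ ∃ f : MvPolynomial (Fin N) F,
      IsInv ρ f ∧ f.IsHomogeneous d ∧ eval v f ≠ 0} := by
    refine ⟨one_pos, ?_⟩
    simp only [Vzero, Set.mem_setOf_eq, not_forall] at hnv
    obtain ⟨f, hinv, hhom, hne⟩ := hnv
    exact ⟨f, hinv, hhom, hne⟩
  refine le_antisymm (Nat.sInf_le hone) ?_
  exact (Nat.sInf_mem (⟨1, hone⟩ : Set.Nonempty _)).1

lemma eps_eq_p {p m : ℕ} [CharP F p] (hp : p.Prime) [Fintype G]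
    (hcard : Fintype.card G = p * m) (hcop : Nat.Coprime p m)
    {ρ : G →* Matrix.GeneralLinearGroup (Fin N) F} {v : Fin N → F}
    (hv : v ≠ 0) (hfix : IsFixedPt ρ v) (hv0 : v ∈ Vzero ρ) : epsGV ρ v = p := by
  have hpS : p ∈ {d : ℕ | 0 < d ∧ ∃ f : MvPolynomial (Fin N) F,
      IsInv ρ f ∧ f.IsHomogeneous d ∧ eval v f ≠ 0} :=
    ⟨hp.pos, exists_inv_deg_p hp hcard hcop ρ v hv hfix⟩
  refine le_antisymm (Nat.sInf_le hpS) ?_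
  obtain ⟨hd0, f, hinv, hhom, hne⟩ := Nat.sInf_mem (⟨p, hpS⟩ : Set.Nonempty _)
  by_contra hlt
  push_neg at hlt
  have hndvd : ¬ p ∣ (sInf {d : ℕ | 0 < d ∧ ∃ f : MvPolynomial (Fin N) F,
      IsInv ρ f ∧ f.IsHomogeneous d ∧ eval v f ≠ 0}) :=
    Nat.not_dvd_of_pos_of_lt hd0 hlt
  have hdF : ((sInf {d : ℕ | 0 < d ∧ ∃ f : MvPolynomial (Fin N) F,
      IsInv ρ f ∧ f.IsHomogeneous d ∧ eval v f ≠ 0} : ℕ) : F) ≠ 0 := by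
    rw [Ne, CharP.cast_eq_zero_iff F p]
    exact hndvd
  exact hne (low_bound hfix hv0 hinv hhom hdF)

end Eps

theorem stmt15 {F : Type*} [Field F] [IsAlgClosed F] {p m : ℕ} (hp : p.Prime) [CharP F p]
    {G : Type*} [Group G] [Fintype G]
    (hcard : Fintype.card G = p * m) (hcop : Nat.Coprime p m)
    {N : ℕ} (ρ : G →* Matrix.GeneralLinearGroup (Fin N) F) :
    ((¬ ∃ v : Fin N → F, v ≠ 0 ∧ IsFixedPt ρ v) → deltaGV ρ = 0) ∧
    ((∃ v : Fin N → F, v ≠ 0 ∧ IsFixedPt ρ v) →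
      (∀ v : Fin N → F, IsFixedPt ρ v → v ∈ Vzero ρ → v = 0) → deltaGV ρ = 1) ∧
    ((∃ v : Fin N → F, v ≠ 0 ∧ IsFixedPt ρ v ∧ v ∈ Vzero ρ) → deltaGV ρ = p) := by
  classical
  have hp1 : 1 ≤ p := hp.one_lt.le
  refine ⟨?_, ?_, ?_⟩
  · -- no nonzero fixed point
    intro hno
    have hT : {e : ℕ | ∃ v : Fin N → F, v ≠ 0 ∧ IsFixedPt ρ v ∧ e = epsGV ρ v} = ∅ := by
      ext e
      simp only [Set.mem_setOf_eq, Set.mem_empty_iff_false, iff_false]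
      rintro ⟨v, hv, hfix, -⟩
      exact hno ⟨v, hv, hfix⟩
    rw [deltaGV, hT, csSup_empty]
    rfl
  · -- nonzero fixed point exists, but V^G ∩ V₀ = 0
    rintro ⟨v, hv, hfix⟩ hall
    have hvz : v ∉ Vzero ρ := fun h => hv (hall v hfix h)
    have h1T : (1 : ℕ) ∈ {e : ℕ | ∃ v : Fin N → F, v ≠ 0 ∧ IsFixedPt ρ v ∧ e = epsGV ρ v} :=
      ⟨v, hv, hfix, (eps_eq_one hvz).symm⟩
    have hbd : ∀ e ∈ {e : ℕ | ∃ v : Fin N → F, v ≠ 0 ∧ IsFixedPt ρ v ∧ e = epsGV ρ v},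
        e ≤ 1 := by
      rintro e ⟨w, hw, hwfix, rfl⟩
      have hwz : w ∉ Vzero ρ := fun h => hw (hall w hwfix h)
      exact (eps_eq_one hwz).le
    exact le_antisymm (csSup_le ⟨1, h1T⟩ hbd) (le_csSup ⟨1, hbd⟩ h1T)
  · -- there is a nonzero fixed point in V₀
    rintro ⟨v, hv, hfix, hv0⟩
    have hpT : p ∈ {e : ℕ | ∃ v : Fin N → F, v ≠ 0 ∧ IsFixedPt ρ v ∧ e = epsGV ρ v} :=
      ⟨v, hv, hfix, (eps_eq_p hp hcard hcop hv hfix hv0).symm⟩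
    have hbd : ∀ e ∈ {e : ℕ | ∃ v : Fin N → F, v ≠ 0 ∧ IsFixedPt ρ v ∧ e = epsGV ρ v},
        e ≤ p := by
      rintro e ⟨w, hw, hwfix, rfl⟩
      by_cases hwz : w ∈ Vzero ρ
      · exact (eps_eq_p hp hcard hcop hw hwfix hwz).le
      · rw [eps_eq_one hwz]
        exact hp1
    exact le_antisymm (csSup_le ⟨p, hpT⟩ hbd) (le_csSup ⟨p, hbd⟩ hpT)
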